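/- Let (X,ρ) be a metric space, let P be an abstract porosity on X, and let A ⊆ X be a closed set that is not σ-P-porous. Then A is not P-reducible; that is, there exists a nonempty closed set F ⊆ A such that no P-porous subset of F has nonempty interior relative to F. -/

import Mathlib

open Metric Filter Set

/-- An abstract porosity on a metric space `X`: a relation between points and subsets
of `X` satisfying the axioms (A1), (A2), (A3). -/
structure AbstractPorosity (X : Type*) [MetricSpace X] where
  rel : X → Set X → Prop
  mono : ∀ (x : X) (A B : Set X), A ⊆ B → rel x B → rel x A
  loc : ∀ (x : X) (A : Set X), rel x A ↔ ∃ r > 0, rel x (A ∩ Metric.ball x r)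
  clos : ∀ (x : X) (A : Set X), rel x A ↔ rel x (closure A)

variable {X : Type*} [MetricSpace X]

/-- `A` is `P`-porous if `P(x,A)` holds at each point `x ∈ A`. -/
def AbstractPorosity.Porous (P : AbstractPorosity X) (A : Set X) : Prop :=
  ∀ x ∈ A, P.rel x A

/-- `A` is σ-`P`-porous if it is a countable union of `P`-porous sets. -/
def AbstractPorosity.SigmaPorous (P : AbstractPorosity X) (A : Set X) : Prop :=
  ∃ f : ℕ → Set X, (∀ n, P.Porous (f n)) ∧ A = ⋃ n, f n

/-- `A` is σ-`P`-porous at `x` if some `A ∩ B(x,r)` (r>0) is σ-`P`-porous. -/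
def AbstractPorosity.SigmaPorousAt (P : AbstractPorosity X) (A : Set X) (x : X) : Prop :=
  ∃ r > 0, P.SigmaPorous (A ∩ Metric.ball x r)

/-- The kernel `K_P(A)`: points of `A` at which `A` is not σ-`P`-porous. -/
def AbstractPorosity.kernel (P : AbstractPorosity X) (A : Set X) : Set X :=
  {x ∈ A | ¬ P.SigmaPorousAt A x}

/-! ### Auxiliary lemmas -/

lemma porous_mono (P : AbstractPorosity X) {A B : Set X} (h : A ⊆ B)
    (hB : P.Porous B) : P.Porous A :=
  fun x hx => P.mono x A B h (hB x (h hx))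

lemma sigmaPorous_mono (P : AbstractPorosity X) {A B : Set X} (h : A ⊆ B)
    (hB : P.SigmaPorous B) : P.SigmaPorous A := by
  obtain ⟨f, hf, rfl⟩ := hB
  refine ⟨fun n => A ∩ f n, fun n => porous_mono P inter_subset_right (hf n), ?_⟩
  rw [← Set.inter_iUnion]
  exact (Set.inter_eq_self_of_subset_left h).symm

lemma sigmaPorous_empty (P : AbstractPorosity X) : P.SigmaPorous (∅ : Set X) :=
  ⟨fun _ => ∅, fun _ x hx => absurd hx (Set.notMem_empty x), by simp⟩

/-- A countable union of porous sets is σ-porous. -/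
lemma sigmaPorous_iUnion_porous (P : AbstractPorosity X) {ι : Type*} [Countable ι]
    (f : ι → Set X) (h : ∀ i, P.Porous (f i)) : P.SigmaPorous (⋃ i, f i) := by
  rcases isEmpty_or_nonempty ι with hι | hι
  · simp only [Set.iUnion_of_empty]
    exact sigmaPorous_empty P
  · obtain ⟨e, he⟩ := exists_surjective_nat ι
    exact ⟨fun n => f (e n), fun n => h (e n), (he.iUnion_comp f).symm⟩

/-- A countable union of σ-porous sets is σ-porous. -/
lemma sigmaPorous_iUnion (P : AbstractPorosity X) {ι : Type*} [Countable ι]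
    (f : ι → Set X) (h : ∀ i, P.SigmaPorous (f i)) : P.SigmaPorous (⋃ i, f i) := by
  choose g hg1 hg2 using h
  have : (⋃ i, f i) = ⋃ p : ι × ℕ, g p.1 p.2 := by
    ext x
    simp only [Set.mem_iUnion, Prod.exists]
    constructor
    · rintro ⟨i, hx⟩
      rw [hg2 i] at hx
      obtain ⟨n, hn⟩ := Set.mem_iUnion.1 hx
      exact ⟨i, n, hn⟩
    · rintro ⟨i, n, hn⟩
      exact ⟨i, (hg2 i) ▸ Set.mem_iUnion.2 ⟨n, hn⟩⟩
  rw [this]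
  exact sigmaPorous_iUnion_porous P _ fun p => hg1 p.1 p.2

lemma sigmaPorous_union (P : AbstractPorosity X) {A B : Set X}
    (hA : P.SigmaPorous A) (hB : P.SigmaPorous B) : P.SigmaPorous (A ∪ B) := by
  rw [Set.union_eq_iUnion]
  exact sigmaPorous_iUnion P _ (fun b => by cases b <;> simpa)

/-- A union of a uniformly separated family of porous sets is porous. -/
lemma porous_iUnion_sep (P : AbstractPorosity X) {ι : Type*} (T : ι → Set X)
    (ε : ℝ) (hε : 0 < ε)
    (hsep : ∀ i j, i ≠ j → ∀ y ∈ T i, ∀ y' ∈ T j, ε ≤ dist y y')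
    (hp : ∀ i, P.Porous (T i)) : P.Porous (⋃ i, T i) := by
  intro x hx
  obtain ⟨i, hxi⟩ := Set.mem_iUnion.1 hx
  have hsub : (⋃ j, T j) ∩ ball x ε ⊆ T i := by
    rintro y ⟨hy, hyb⟩
    obtain ⟨j, hyj⟩ := Set.mem_iUnion.1 hy
    by_cases hij : j = i
    · exact hij ▸ hyj
    · exact absurd (mem_ball.1 hyb) (not_lt.2 (dist_comm x y ▸ hsep j i hij y hyj x hxi))
  exact (P.loc x _).2 ⟨ε, hε, P.mono x _ _ hsub (hp i x hxi)⟩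

/-- Uniform locality: if `M ∩ B(x, δ)` is σ-porous for every `x ∈ M` (with a fixed
`δ > 0`), then `M` is σ-porous.  (A Stone-type σ-discrete decomposition argument.) -/
lemma sigmaPorous_of_unif_local (P : AbstractPorosity X) (M : Set X) (δ : ℝ)
    (hδ : 0 < δ) (h : ∀ x ∈ M, P.SigmaPorous (M ∩ ball x δ)) : P.SigmaPorous M := by
  classical
  set r : X → X → Prop := WellOrderingRel with hr
  have hwo : IsWellOrder X r := inferInstance
  have hwf : WellFounded r := hwo.wf
  -- the choice function: the `r`-least admissible center
  have h1 : ∀ y : M, ∃ x : M, dist (x : X) y < δ / 2 ∧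
      ∀ z : M, dist (z : X) y < δ / 2 → ¬ r (z : X) (x : X) := by
    intro y
    set S : Set X := {x : X | x ∈ M ∧ dist x (y : X) < δ / 2} with hS
    have hSne : S.Nonempty := ⟨y, y.2, by simpa using (by positivity : (0:ℝ) < δ / 2)⟩
    refine ⟨⟨hwf.min S hSne, (hwf.min_mem S hSne).1⟩, (hwf.min_mem S hSne).2, ?_⟩
    intro z hz
    exact hwf.not_lt_min S (show (z : X) ∈ S from ⟨z.2, hz⟩)
  choose c hc1 hc2 using h1
  -- the scale function
  have h2 : ∀ y : M, ∃ n : ℕ, dist ((c y : X)) (y : X) < δ / 2 - δ * (1 / 2) ^ (n + 1) := by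
    intro y
    have hlt : dist ((c y : X)) (y : X) < δ / 2 := hc1 y
    obtain ⟨n, hn⟩ := exists_pow_lt_of_lt_one
      (x := (δ / 2 - dist ((c y : X)) (y : X)) / δ)
      (div_pos (by linarith) hδ) (by norm_num : (1 : ℝ) / 2 < 1)
    refine ⟨n, ?_⟩
    have h1 : δ * (1 / 2 : ℝ) ^ n < δ / 2 - dist ((c y : X)) (y : X) := by
      have := (mul_lt_mul_iff_right₀ hδ).2 hn
      rwa [mul_div_cancel₀ _ (ne_of_gt hδ)] at this
    have h2 : δ * (1 / 2 : ℝ) ^ (n + 1) ≤ δ * (1 / 2) ^ n := by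
      apply mul_le_mul_of_nonneg_left _ hδ.le
      apply pow_le_pow_of_le_one (by norm_num) (by norm_num)
      omega
    linarith
  choose nn hnn using h2
  -- the pieces
  set C : ℕ → M → Set X := fun n x0 =>
    {y : X | ∃ hy : y ∈ M, c ⟨y, hy⟩ = x0 ∧ nn ⟨y, hy⟩ = n} with hC
  -- each piece is σ-porous
  have hCsp : ∀ (n : ℕ) (x0 : M), P.SigmaPorous (C n x0) := by
    intro n x0
    apply sigmaPorous_mono P (B := M ∩ ball (x0 : X) δ) _ (h x0 x0.2)
    rintro y ⟨hy, hcy, -⟩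
    refine ⟨hy, ?_⟩
    have : dist ((c ⟨y, hy⟩ : X)) y < δ / 2 := hc1 _
    rw [hcy] at this
    rw [mem_ball, dist_comm]
    linarith
  -- separation between distinct pieces at the same scale
  have hsep : ∀ (n : ℕ) (x0 x1 : M), x0 ≠ x1 →
      ∀ y ∈ C n x0, ∀ y' ∈ C n x1, δ * (1 / 2) ^ (n + 1) ≤ dist y y' := by
    intro n x0 x1 hne y hy y' hy'
    obtain ⟨hyM, hcy, hny⟩ := hy
    obtain ⟨hy'M, hcy', hny'⟩ := hy'
    have key : ∀ (a b : M) (ha : (a:X) ∈ M), r (a : X) (b : X) →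
        ∀ (w w' : X) (hw : w ∈ M) (hw' : w' ∈ M), c ⟨w, hw⟩ = a → nn ⟨w, hw⟩ = n →
        c ⟨w', hw'⟩ = b → δ * (1 / 2) ^ (n + 1) ≤ dist w w' := by
      intro a b ha hab w w' hw hw' hcw hnw hcw'
      -- a is not admissible for w'
      have hfar : δ / 2 ≤ dist (a : X) w' := by
        by_contra hclose
        push_neg at hclose
        exact hc2 ⟨w', hw'⟩ a hclose (by rw [hcw']; exact hab)
      have hnear : dist (a : X) w < δ / 2 - δ * (1 / 2) ^ (n + 1) := by
        have := hnn ⟨w, hw⟩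
        rw [hcw, hnw] at this
        exact this
      have htri : dist (a : X) w' ≤ dist (a : X) w + dist w w' := dist_triangle _ _ _
      linarith
    have hnex : (x0 : X) ≠ (x1 : X) := fun hxy => hne (Subtype.ext hxy)
    rcases @trichotomous_of X r hwo.toTrichotomous (x0 : X) (x1 : X) with h01 | heq | h10
    · exact key x0 x1 x0.2 h01 y y' hyM hy'M hcy hny hcy'
    · exact absurd heq hnex
    · rw [dist_comm]
      exact key x1 x0 x1.2 h10 y' y hy'M hyM hcy' hny' hcy
  -- choose porous decompositions of the pieces
  have hdec : ∀ (n : ℕ) (x0 : M), ∃ g : ℕ → Set X,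
      (∀ k, P.Porous (g k)) ∧ C n x0 = ⋃ k, g k := fun n x0 => hCsp n x0
  choose g hg1 hg2 using hdec
  have hgsub : ∀ (n : ℕ) (x0 : M) (k : ℕ), g n x0 k ⊆ C n x0 := by
    intro n x0 k y hy
    rw [hg2 n x0]
    exact Set.mem_iUnion.2 ⟨k, hy⟩
  -- the grouped unions are porous
  have hgroup : ∀ (n k : ℕ), P.Porous (⋃ x0 : M, g n x0 k) := by
    intro n k
    apply porous_iUnion_sep P _ (δ * (1 / 2) ^ (n + 1)) (by positivity)
    · intro i j hij y hy y' hy'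
      exact hsep n i j hij y (hgsub n i k hy) y' (hgsub n j k hy')
    · exact fun x0 => hg1 n x0 k
  -- assemble
  have hcover : M = ⋃ p : ℕ × ℕ, ⋃ x0 : M, g p.1 x0 p.2 := by
    ext y
    constructor
    · intro hy
      have hyC : y ∈ C (nn ⟨y, hy⟩) (c ⟨y, hy⟩) := ⟨hy, rfl, rfl⟩
      rw [hg2 (nn ⟨y, hy⟩) (c ⟨y, hy⟩)] at hyC
      obtain ⟨k, hk⟩ := Set.mem_iUnion.1 hyC
      exact Set.mem_iUnion.2 ⟨(nn ⟨y, hy⟩, k), Set.mem_iUnion.2 ⟨c ⟨y, hy⟩, hk⟩⟩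
    · intro hy
      obtain ⟨p, hp⟩ := Set.mem_iUnion.1 hy
      obtain ⟨x0, hx0⟩ := Set.mem_iUnion.1 hp
      obtain ⟨hyM, -, -⟩ := hgsub p.1 x0 p.2 hx0
      exact hyM
  rw [hcover]
  exact sigmaPorous_iUnion_porous P _ fun p => hgroup p.1 p.2

/-- Locality: if `M` is σ-porous at each of its points, then `M` is σ-porous. -/
lemma sigmaPorous_of_local (P : AbstractPorosity X) (M : Set X)
    (h : ∀ x ∈ M, ∃ r > 0, P.SigmaPorous (M ∩ ball x r)) : P.SigmaPorous M := by
  set Mn : ℕ → Set X := fun n =>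
    {x ∈ M | P.SigmaPorous (M ∩ ball x (1 / (n + 1)))} with hMn
  have hcov : M = ⋃ n, Mn n := by
    ext x
    constructor
    · intro hx
      obtain ⟨r, hr, hsp⟩ := h x hx
      obtain ⟨n, hn⟩ := exists_nat_one_div_lt (K := ℝ) hr
      refine Set.mem_iUnion.2 ⟨n, hx, ?_⟩
      exact sigmaPorous_mono P
        (Set.inter_subset_inter_right M (ball_subset_ball hn.le)) hsp
    · intro hx
      obtain ⟨n, hn, -⟩ := Set.mem_iUnion.1 hx
      exact hn
  rw [hcov]
  apply sigmaPorous_iUnion P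
  intro n
  apply sigmaPorous_of_unif_local P _ (1 / (n + 1 : ℝ)) Nat.one_div_pos_of_nat
  intro x hx
  exact sigmaPorous_mono P (Set.inter_subset_inter_left _ fun y hy => hy.1) hx.2

/-- A closed non-σ-`P`-porous set is not `P`-reducible: it contains a nonempty closed
subset `F` in which no `P`-porous subset has nonempty relative interior. -/
theorem not_reducible_of_closed_not_sigmaPorous {X : Type*} [MetricSpace X]
    (P : AbstractPorosity X) (A : Set X) (hAcl : IsClosed A) (hA : ¬ P.SigmaPorous A) :
    ∃ F : Set X, F.Nonempty ∧ IsClosed F ∧ F ⊆ A ∧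
      ∀ S : Set X, S ⊆ F → P.Porous S →
        ∀ U : Set X, IsOpen U → U ∩ F ⊆ S → U ∩ F = ∅ := by
  classical
  set F : Set X := P.kernel A with hF
  have hFsubA : F ⊆ A := fun x hx => hx.1
  -- the complement of the kernel in `A` is σ-porous
  have hdiff : P.SigmaPorous (A \ F) := by
    apply sigmaPorous_of_local P
    intro x hx
    have hxat : P.SigmaPorousAt A x := by
      by_contra hcon
      exact hx.2 ⟨hx.1, hcon⟩
    obtain ⟨r, hr, hsp⟩ := hxat
    exact ⟨r, hr, sigmaPorous_mono P
      (Set.inter_subset_inter_left _ fun y hy => hy.1) hsp⟩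
  -- F is nonempty
  have hFne : F.Nonempty := by
    by_contra hcon
    rw [Set.not_nonempty_iff_eq_empty] at hcon
    apply hA
    have : A \ F = A := by rw [hcon, Set.diff_empty]
    rwa [this] at hdiff
  -- F is closed
  have hFcl : IsClosed F := by
    rw [← isOpen_compl_iff, Metric.isOpen_iff]
    intro x hx
    by_cases hxA : x ∈ A
    · have hxat : P.SigmaPorousAt A x := by
        by_contra hcon
        exact hx ⟨hxA, hcon⟩
      obtain ⟨r, hr, hsp⟩ := hxat
      refine ⟨r / 2, by positivity, ?_⟩
      intro y hy hyF
      apply hyF.2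
      refine ⟨r / 2, by positivity, ?_⟩
      apply sigmaPorous_mono P _ hsp
      apply Set.inter_subset_inter_right
      intro z hz
      rw [mem_ball] at hy hz ⊢
      calc dist z x ≤ dist z y + dist y x := dist_triangle _ _ _
        _ < r / 2 + r / 2 := add_lt_add hz hy
        _ = r := by ring
    · obtain ⟨r, hr, hsub⟩ := Metric.isOpen_iff.1 hAcl.isOpen_compl x hxA
      exact ⟨r, hr, fun y hy hyF => hsub hy (hFsubA hyF)⟩
  refine ⟨F, hFne, hFcl, hFsubA, ?_⟩
  -- no porous subset of F has nonempty relative interior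
  intro S hSF hSp U hU hUF
  by_contra hcon
  obtain ⟨x, hxU, hxF⟩ := Set.inter_nonempty_iff_exists_left.1
    (Set.nonempty_iff_ne_empty.2 hcon)
  obtain ⟨r, hr, hball⟩ := Metric.isOpen_iff.1 hU x hxU
  apply hxF.2
  refine ⟨r, hr, ?_⟩
  have hsub : A ∩ ball x r ⊆ S ∪ (A \ F) := by
    rintro z ⟨hzA, hzb⟩
    by_cases hzF : z ∈ F
    · exact Or.inl (hUF ⟨hball hzb, hzF⟩)
    · exact Or.inr ⟨hzA, hzF⟩
  apply sigmaPorous_mono P hsub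
  apply sigmaPorous_union P _ hdiff
  exact ⟨fun _ => S, fun _ => hSp, (Set.iUnion_const S).symm⟩
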